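/- arXiv:0911.0606 — 3 statements merged into one kernel-verified Lean document; each statement's English description precedes it below -/
import Mathlib

section
/- Let A be a bounded operator on ℓ² with matrix (a(i,j)), and let a : ℕ × ℕ → ℂ be the function a(i,j) = ⟪A e_j, e_i⟫. Then a is a Schur multiplier and ‖a‖_m ≤ ‖A‖_op, where ‖A‖_op is the operator norm of A. -/
open scoped InnerProductSpace

noncomputable section

/-- The Hilbert space `ℓ² = ℓ²(ℕ, ℂ)`. -/
abbrev l2 : Type := lp (fun _ : ℕ => ℂ) 2

/-- The standard orthonormal basis vector `e i` of `ℓ²`. -/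
def e (i : ℕ) : l2 := lp.single 2 i 1

/-- The matrix entry `a(i,j) = ⟪A e_j, e_i⟫` of a bounded operator `A` on `ℓ²`. -/
def ent (A : l2 →L[ℂ] l2) (i j : ℕ) : ℂ := ⟪A (e j), e i⟫_ℂ

/-- A function `φ : ℕ × ℕ → ℂ` is a Schur multiplier if for every bounded operator `A` on
`ℓ²` there is a bounded operator on `ℓ²` whose matrix is `(φ(i,j) * a(i,j))`. -/
def IsSchurMultiplier (φ : ℕ × ℕ → ℂ) : Prop :=
  ∀ A : l2 →L[ℂ] l2, ∃ B : l2 →L[ℂ] l2, ∀ i j, ent B i j = φ (i, j) * ent A i j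

open scoped ENNReal

namespace SchurAux

open Complex ContinuousLinearMap
open scoped ComplexConjugate

abbrev l2p : Type := lp (fun _ : ℕ × ℕ => ℂ) 2

lemma two_toReal : ((2 : ℝ≥0∞)).toReal = 2 := by norm_num

lemma rpow_two_eq (a : ℝ) : a ^ ((2 : ℝ≥0∞)).toReal = a ^ 2 := by
  rw [two_toReal, show (2:ℝ) = ((2:ℕ):ℝ) by norm_num, Real.rpow_natCast]

lemma norm_sq_lp {ι : Type*} (x : lp (fun _ : ι => ℂ) 2) : ‖x‖ ^ 2 = ∑' k, ‖x k‖ ^ 2 := by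
  have h := lp.norm_rpow_eq_tsum (p := 2) (E := fun _ : ι => ℂ) (by norm_num) x
  simpa [rpow_two_eq] using h

lemma summable_norm_sq {ι : Type*} (x : lp (fun _ : ι => ℂ) 2) :
    Summable fun k => ‖x k‖ ^ 2 := by
  have h := (lp.memℓp x).summable (p := 2) (by norm_num)
  simpa [rpow_two_eq] using h

lemma memℓp_two {ι : Type*} {f : ι → ℂ} (h : Summable fun k => ‖f k‖ ^ 2) : Memℓp f 2 := by
  apply memℓp_gen
  simpa [rpow_two_eq] using h

lemma norm_e (i : ℕ) : ‖e i‖ = 1 := by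
  have := lp.norm_single (p := 2) (E := fun _ : ℕ => ℂ) (by norm_num) i (1:ℂ)
  simpa [e] using this

lemma ent_eq (T : l2 →L[ℂ] l2) (i j : ℕ) : ent T i j = conj ((T (e j)) i) := by
  rw [ent, show e i = lp.single 2 i 1 from rfl, lp.inner_single_right]
  simp [RCLike.inner_apply]

set_option maxHeartbeats 1000000
set_option synthInstance.maxHeartbeats 200000

lemma norm_apply_e_le (T : l2 →L[ℂ] l2) (j : ℕ) : ‖T (e j)‖ ≤ ‖T‖ := by
  calc ‖T (e j)‖ ≤ ‖T‖ * ‖e j‖ := T.le_opNorm _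
    _ = ‖T‖ := by rw [norm_e, mul_one]

/-- the `U` function: `U ξ (j, i) = ξ j * (A e_j) i`. -/
def Ufun (A : l2 →L[ℂ] l2) (ξ : l2) : (ℕ × ℕ) → ℂ :=
  fun p => ξ p.1 * (A (e p.1)) p.2

lemma Ufun_sq (A : l2 →L[ℂ] l2) (ξ : l2) :
    Summable (fun p : ℕ × ℕ => ‖Ufun A ξ p‖ ^ 2) ∧
      ∑' p : ℕ × ℕ, ‖Ufun A ξ p‖ ^ 2 ≤ (‖A‖ * ‖ξ‖) ^ 2 := by
  have hpt : ∀ p : ℕ × ℕ, ‖Ufun A ξ p‖ ^ 2 = ‖ξ p.1‖ ^ 2 * ‖(A (e p.1)) p.2‖ ^ 2 := by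
    intro p; simp [Ufun, mul_pow]
  have h1 : ∀ j, Summable fun i => ‖Ufun A ξ (j, i)‖ ^ 2 := by
    intro j
    simp only [hpt]
    exact (summable_norm_sq (A (e j))).mul_left _
  have h2 : ∀ j, (∑' i, ‖Ufun A ξ (j, i)‖ ^ 2) = ‖ξ j‖ ^ 2 * ‖A (e j)‖ ^ 2 := by
    intro j
    simp only [hpt]
    rw [tsum_mul_left, ← norm_sq_lp]
  have hle : ∀ j, ‖ξ j‖ ^ 2 * ‖A (e j)‖ ^ 2 ≤ ‖A‖ ^ 2 * ‖ξ j‖ ^ 2 := by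
    intro j
    rw [mul_comm (‖A‖^2)]
    exact mul_le_mul_of_nonneg_left
      (pow_le_pow_left₀ (norm_nonneg _) (norm_apply_e_le A j) 2) (by positivity)
  have h3 : Summable fun j => ‖ξ j‖ ^ 2 * ‖A (e j)‖ ^ 2 :=
    Summable.of_nonneg_of_le (fun j => by positivity) hle
      ((summable_norm_sq ξ).mul_left (‖A‖ ^ 2))
  have hsum : Summable (fun p : ℕ × ℕ => ‖Ufun A ξ p‖ ^ 2) := by
    refine (summable_prod_of_nonneg (fun p => by positivity)).2 ⟨h1, ?_⟩
    exact h3.congr fun j => (h2 j).symm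
  refine ⟨hsum, ?_⟩
  rw [Summable.tsum_prod' hsum h1]
  calc (∑' j, ∑' i, ‖Ufun A ξ (j, i)‖ ^ 2) = ∑' j, ‖ξ j‖ ^ 2 * ‖A (e j)‖ ^ 2 := by
        simp only [h2]
    _ ≤ ∑' j, ‖A‖ ^ 2 * ‖ξ j‖ ^ 2 :=
        Summable.tsum_le_tsum hle h3 ((summable_norm_sq ξ).mul_left _)
    _ = (‖A‖ * ‖ξ‖) ^ 2 := by
        rw [tsum_mul_left, ← norm_sq_lp, mul_pow]

/-- column square sums of `T` are bounded by `‖T‖²`. -/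
lemma col_sq (T : l2 →L[ℂ] l2) (i : ℕ) :
    Summable (fun j => ‖(T (e j)) i‖ ^ 2) ∧ ∑' j, ‖(T (e j)) i‖ ^ 2 ≤ ‖T‖ ^ 2 := by
  set f := (ContinuousLinearMap.adjoint T) (e i) with hf
  have key : ∀ j, ‖(T (e j)) i‖ = ‖f j‖ := by
    intro j
    have h1 : ⟪f, e j⟫_ℂ = ⟪e i, T (e j)⟫_ℂ := ContinuousLinearMap.adjoint_inner_left T (e j) (e i)
    rw [show e j = lp.single 2 j 1 from rfl, show e i = lp.single 2 i 1 from rfl] at h1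
    rw [show e j = lp.single 2 j 1 from rfl]
    rw [lp.inner_single_right, lp.inner_single_left] at h1
    simp only [RCLike.inner_apply, map_one, mul_one, one_mul] at h1
    rw [← h1]
    simp
  have hs : Summable (fun j => ‖(T (e j)) i‖ ^ 2) := by
    simp only [key]; exact summable_norm_sq f
  refine ⟨hs, ?_⟩
  have : (∑' j, ‖(T (e j)) i‖ ^ 2) = ‖f‖ ^ 2 := by
    simp only [key]; rw [← norm_sq_lp]
  rw [this]
  have hfa : ‖f‖ ≤ ‖T‖ := by
    calc ‖f‖ ≤ ‖ContinuousLinearMap.adjoint T‖ := norm_apply_e_le _ i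
      _ = ‖T‖ := by
        exact (ContinuousLinearMap.adjoint (𝕜 := ℂ) (E := l2) (F := l2)).norm_map T
  exact pow_le_pow_left₀ (norm_nonneg _) hfa 2

/-- the `W` function: `W T η (j, i) = conj ((T e_j) i) * η i`. -/
def Wfun (T : l2 →L[ℂ] l2) (η : l2) : (ℕ × ℕ) → ℂ :=
  fun p => conj ((T (e p.1)) p.2) * η p.2

lemma Wfun_sq (T : l2 →L[ℂ] l2) (η : l2) :
    Summable (fun p : ℕ × ℕ => ‖Wfun T η p‖ ^ 2) ∧
      ∑' p : ℕ × ℕ, ‖Wfun T η p‖ ^ 2 ≤ (‖T‖ * ‖η‖) ^ 2 := by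
  have hpt : ∀ p : ℕ × ℕ, ‖Wfun T η p‖ ^ 2 = ‖η p.2‖ ^ 2 * ‖(T (e p.1)) p.2‖ ^ 2 := by
    intro p
    simp only [Wfun, norm_mul, RCLike.norm_conj, mul_pow]
    ring
  have h1 : ∀ i, Summable fun j => ‖η i‖ ^ 2 * ‖(T (e j)) i‖ ^ 2 :=
    fun i => ((col_sq T i).1).mul_left _
  have hle : ∀ i, (∑' j, ‖η i‖ ^ 2 * ‖(T (e j)) i‖ ^ 2) ≤ ‖T‖ ^ 2 * ‖η i‖ ^ 2 := by
    intro i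
    rw [tsum_mul_left, mul_comm (‖T‖ ^ 2)]
    exact mul_le_mul_of_nonneg_left (col_sq T i).2 (by positivity)
  have hgsum : Summable (fun q : ℕ × ℕ => ‖η q.1‖ ^ 2 * ‖(T (e q.2)) q.1‖ ^ 2) := by
    refine (summable_prod_of_nonneg (fun q => by positivity)).2 ⟨h1, ?_⟩
    exact Summable.of_nonneg_of_le (fun i => tsum_nonneg fun j => by positivity) hle
      ((summable_norm_sq η).mul_left _)
  have hcomp : ∀ q : ℕ × ℕ, ‖Wfun T η ((Equiv.prodComm ℕ ℕ) q)‖ ^ 2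
      = ‖η q.1‖ ^ 2 * ‖(T (e q.2)) q.1‖ ^ 2 := fun q => hpt _
  have hsum : Summable (fun p : ℕ × ℕ => ‖Wfun T η p‖ ^ 2) := by
    refine (Equiv.prodComm ℕ ℕ).summable_iff.1 ?_
    exact hgsum.congr fun q => (hcomp q).symm
  refine ⟨hsum, ?_⟩
  rw [← (Equiv.prodComm ℕ ℕ).tsum_eq (fun p : ℕ × ℕ => ‖Wfun T η p‖ ^ 2)]
  calc (∑' q : ℕ × ℕ, ‖Wfun T η ((Equiv.prodComm ℕ ℕ) q)‖ ^ 2)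
      = ∑' q : ℕ × ℕ, ‖η q.1‖ ^ 2 * ‖(T (e q.2)) q.1‖ ^ 2 := tsum_congr hcomp
    _ = ∑' i, ∑' j, ‖η i‖ ^ 2 * ‖(T (e j)) i‖ ^ 2 := Summable.tsum_prod' hgsum h1
    _ ≤ ∑' i, ‖T‖ ^ 2 * ‖η i‖ ^ 2 :=
        Summable.tsum_le_tsum hle ((summable_prod_of_nonneg (fun q => by positivity)).1 hgsum).2
          ((summable_norm_sq η).mul_left _)
    _ = (‖T‖ * ‖η‖) ^ 2 := by rw [tsum_mul_left, ← norm_sq_lp, mul_pow]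

lemma e_apply_self (i : ℕ) : (e i) i = 1 := lp.single_apply_self 2 i 1

lemma e_apply_ne {i j : ℕ} (h : j ≠ i) : (e i) j = 0 := lp.single_apply_ne 2 i 1 h

/-- `U ξ` as an element of `ℓ²(ℕ × ℕ)`. -/
def Uel (A : l2 →L[ℂ] l2) (ξ : l2) : l2p := ⟨Ufun A ξ, memℓp_two (Ufun_sq A ξ).1⟩

lemma Uel_apply (A : l2 →L[ℂ] l2) (ξ : l2) (p : ℕ × ℕ) :
    (Uel A ξ) p = ξ p.1 * (A (e p.1)) p.2 := rfl

lemma norm_Uel_le (A : l2 →L[ℂ] l2) (ξ : l2) : ‖Uel A ξ‖ ≤ ‖A‖ * ‖ξ‖ := by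
  refine le_of_pow_le_pow_left₀ two_ne_zero (by positivity) ?_
  rw [norm_sq_lp]
  exact (Ufun_sq A ξ).2

/-- `W T η` as an element of `ℓ²(ℕ × ℕ)`. -/
def Wel (T : l2 →L[ℂ] l2) (η : l2) : l2p := ⟨Wfun T η, memℓp_two (Wfun_sq T η).1⟩

lemma Wel_apply (T : l2 →L[ℂ] l2) (η : l2) (p : ℕ × ℕ) :
    (Wel T η) p = conj ((T (e p.1)) p.2) * η p.2 := rfl

lemma norm_Wel_le (T : l2 →L[ℂ] l2) (η : l2) : ‖Wel T η‖ ≤ ‖T‖ * ‖η‖ := by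
  refine le_of_pow_le_pow_left₀ two_ne_zero (by positivity) ?_
  rw [norm_sq_lp]
  exact (Wfun_sq T η).2

lemma Uel_add (A : l2 →L[ℂ] l2) (ξ ξ' : l2) : Uel A (ξ + ξ') = Uel A ξ + Uel A ξ' := by
  apply lp.ext
  rw [lp.coeFn_add]
  funext p
  show Ufun A (ξ + ξ') p = Ufun A ξ p + Ufun A ξ' p
  simp only [Ufun, lp.coeFn_add, Pi.add_apply, add_mul]

lemma Uel_smul (A : l2 →L[ℂ] l2) (c : ℂ) (ξ : l2) : Uel A (c • ξ) = c • Uel A ξ := by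
  apply lp.ext
  rw [lp.coeFn_smul]
  funext p
  show Ufun A (c • ξ) p = c • Ufun A ξ p
  simp only [Ufun, lp.coeFn_smul, Pi.smul_apply, smul_eq_mul, mul_assoc]

lemma Wel_add (T : l2 →L[ℂ] l2) (η η' : l2) : Wel T (η + η') = Wel T η + Wel T η' := by
  apply lp.ext
  rw [lp.coeFn_add]
  funext p
  show Wfun T (η + η') p = Wfun T η p + Wfun T η' p
  simp only [Wfun, lp.coeFn_add, Pi.add_apply, mul_add]

lemma Wel_smul (T : l2 →L[ℂ] l2) (c : ℂ) (η : l2) : Wel T (c • η) = c • Wel T η := by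
  apply lp.ext
  rw [lp.coeFn_smul]
  funext p
  show Wfun T (c • η) p = c • Wfun T η p
  simp only [Wfun, lp.coeFn_smul, Pi.smul_apply, smul_eq_mul]
  ring

lemma Wel_addT (T T' : l2 →L[ℂ] l2) (η : l2) : Wel (T + T') η = Wel T η + Wel T' η := by
  apply lp.ext
  rw [lp.coeFn_add]
  funext p
  show Wfun (T + T') η p = Wfun T η p + Wfun T' η p
  simp only [Wfun, ContinuousLinearMap.add_apply, lp.coeFn_add, Pi.add_apply, map_add, add_mul]

lemma Wel_smulT (T : l2 →L[ℂ] l2) (c : ℂ) (η : l2) : Wel (c • T) η = (conj c) • Wel T η := by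
  apply lp.ext
  rw [lp.coeFn_smul]
  funext p
  show Wfun (c • T) η p = (conj c) • Wfun T η p
  simp only [Wfun, ContinuousLinearMap.smul_apply, lp.coeFn_smul, Pi.smul_apply, smul_eq_mul,
    map_mul]
  ring

lemma inner_UW_le (A T : l2 →L[ℂ] l2) (ξ η : l2) :
    ‖⟪Uel A ξ, Wel T η⟫_ℂ‖ ≤ ‖A‖ * ‖ξ‖ * ‖T‖ * ‖η‖ := by
  calc ‖⟪Uel A ξ, Wel T η⟫_ℂ‖ ≤ ‖Uel A ξ‖ * ‖Wel T η‖ := norm_inner_le_norm _ _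
    _ ≤ (‖A‖ * ‖ξ‖) * (‖T‖ * ‖η‖) :=
        mul_le_mul (norm_Uel_le A ξ) (norm_Wel_le T η) (norm_nonneg _) (by positivity)
    _ = ‖A‖ * ‖ξ‖ * ‖T‖ * ‖η‖ := by ring

/-- The continuous linear functional `η ↦ ⟪U ξ, W T η⟫`. -/
def Lform (A T : l2 →L[ℂ] l2) (ξ : l2) : l2 →L[ℂ] ℂ :=
  LinearMap.mkContinuous
    { toFun := fun η => ⟪Uel A ξ, Wel T η⟫_ℂ
      map_add' := fun η η' => by
        show ⟪Uel A ξ, Wel T (η + η')⟫_ℂ = ⟪Uel A ξ, Wel T η⟫_ℂ + ⟪Uel A ξ, Wel T η'⟫_ℂ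
        rw [Wel_add, inner_add_right]
      map_smul' := fun c η => by
        show ⟪Uel A ξ, Wel T (c • η)⟫_ℂ = (RingHom.id ℂ) c • ⟪Uel A ξ, Wel T η⟫_ℂ
        rw [Wel_smul, inner_smul_right, RingHom.id_apply, smul_eq_mul] }
    (‖A‖ * ‖ξ‖ * ‖T‖)
    (fun η => inner_UW_le A T ξ η)

lemma Lform_apply (A T : l2 →L[ℂ] l2) (ξ η : l2) :
    Lform A T ξ η = ⟪Uel A ξ, Wel T η⟫_ℂ := rfl

lemma norm_Lform_le (A T : l2 →L[ℂ] l2) (ξ : l2) : ‖Lform A T ξ‖ ≤ ‖A‖ * ‖ξ‖ * ‖T‖ :=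
  LinearMap.mkContinuous_norm_le _ (by positivity) _

lemma Lform_addξ (A T : l2 →L[ℂ] l2) (ξ ξ' : l2) :
    Lform A T (ξ + ξ') = Lform A T ξ + Lform A T ξ' := by
  ext η
  simp only [Lform_apply, ContinuousLinearMap.add_apply, Uel_add, inner_add_left]

lemma Lform_smulξ (A T : l2 →L[ℂ] l2) (c : ℂ) (ξ : l2) :
    Lform A T (c • ξ) = (conj c) • Lform A T ξ := by
  ext η
  simp only [Lform_apply, ContinuousLinearMap.smul_apply, Uel_smul, inner_smul_left,
    smul_eq_mul]

lemma Lform_addT (A T T' : l2 →L[ℂ] l2) (ξ : l2) :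
    Lform A (T + T') ξ = Lform A T ξ + Lform A T' ξ := by
  ext η
  simp only [Lform_apply, ContinuousLinearMap.add_apply, Wel_addT, inner_add_right]

lemma Lform_smulT (A T : l2 →L[ℂ] l2) (c : ℂ) (ξ : l2) :
    Lform A (c • T) ξ = (conj c) • Lform A T ξ := by
  ext η
  simp only [Lform_apply, ContinuousLinearMap.smul_apply, Wel_smulT, inner_smul_right,
    smul_eq_mul]

/-- The Schur multiplication operator, as a linear map in `ξ`. -/
def SopLin (A T : l2 →L[ℂ] l2) : l2 →ₗ[ℂ] l2 where
  toFun ξ := (InnerProductSpace.toDual ℂ l2).symm (Lform A T ξ)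
  map_add' ξ ξ' := by
    show (InnerProductSpace.toDual ℂ l2).symm (Lform A T (ξ + ξ')) =
      (InnerProductSpace.toDual ℂ l2).symm (Lform A T ξ) +
        (InnerProductSpace.toDual ℂ l2).symm (Lform A T ξ')
    rw [Lform_addξ, map_add]
  map_smul' c ξ := by
    show (InnerProductSpace.toDual ℂ l2).symm (Lform A T (c • ξ)) =
      (RingHom.id ℂ) c • (InnerProductSpace.toDual ℂ l2).symm (Lform A T ξ)
    rw [Lform_smulξ, LinearIsometryEquiv.map_smulₛₗ]
    simp

def Sop (A T : l2 →L[ℂ] l2) : l2 →L[ℂ] l2 :=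
  LinearMap.mkContinuous (SopLin A T) (‖A‖ * ‖T‖) fun ξ => by
    show ‖(InnerProductSpace.toDual ℂ l2).symm (Lform A T ξ)‖ ≤ _
    rw [LinearIsometryEquiv.norm_map]
    calc ‖Lform A T ξ‖ ≤ ‖A‖ * ‖ξ‖ * ‖T‖ := norm_Lform_le A T ξ
      _ = ‖A‖ * ‖T‖ * ‖ξ‖ := by ring

lemma Sop_apply (A T : l2 →L[ℂ] l2) (ξ : l2) :
    Sop A T ξ = (InnerProductSpace.toDual ℂ l2).symm (Lform A T ξ) := rfl

lemma norm_Sop_le (A T : l2 →L[ℂ] l2) : ‖Sop A T‖ ≤ ‖A‖ * ‖T‖ :=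
  LinearMap.mkContinuous_norm_le _ (by positivity) _

lemma inner_Sop (A T : l2 →L[ℂ] l2) (ξ η : l2) :
    ⟪Sop A T ξ, η⟫_ℂ = ⟪Uel A ξ, Wel T η⟫_ℂ := by
  rw [Sop_apply, InnerProductSpace.toDual_symm_apply, Lform_apply]

lemma Sop_addT (A T T' : l2 →L[ℂ] l2) : Sop A (T + T') = Sop A T + Sop A T' := by
  refine ContinuousLinearMap.ext fun ξ => ?_
  show (InnerProductSpace.toDual ℂ l2).symm (Lform A (T + T') ξ) =
    (Sop A T + Sop A T') ξ
  rw [Lform_addT, map_add]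
  rfl

lemma Sop_smulT (A T : l2 →L[ℂ] l2) (c : ℂ) : Sop A (c • T) = c • Sop A T := by
  refine ContinuousLinearMap.ext fun ξ => ?_
  show (InnerProductSpace.toDual ℂ l2).symm (Lform A (c • T) ξ) = (c • Sop A T) ξ
  rw [Lform_smulT, LinearIsometryEquiv.map_smulₛₗ]
  simp only [starRingEnd_self_apply]
  rfl

/-- The Schur multiplier `S` as a linear map on `B(ℓ²)`. -/
def SchurSLin (A : l2 →L[ℂ] l2) : (l2 →L[ℂ] l2) →ₗ[ℂ] (l2 →L[ℂ] l2) where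
  toFun := Sop A
  map_add' := Sop_addT A
  map_smul' c T := by
    show Sop A (c • T) = (RingHom.id ℂ) c • Sop A T
    rw [RingHom.id_apply, Sop_smulT]

/-- The Schur multiplier `S` as a bounded operator on `B(ℓ²)`. -/
def SchurS (A : l2 →L[ℂ] l2) : (l2 →L[ℂ] l2) →L[ℂ] (l2 →L[ℂ] l2) :=
  LinearMap.mkContinuous (SchurSLin A) ‖A‖ fun T => norm_Sop_le A T

lemma SchurS_apply (A T : l2 →L[ℂ] l2) : SchurS A T = Sop A T := rfl

lemma norm_SchurS_le (A : l2 →L[ℂ] l2) : ‖SchurS A‖ ≤ ‖A‖ :=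
  LinearMap.mkContinuous_norm_le _ (norm_nonneg A) _

lemma ent_Sop (A T : l2 →L[ℂ] l2) (i j : ℕ) :
    ent (Sop A T) i j = ent A i j * ent T i j := by
  have h : ent (Sop A T) i j = ⟪Uel A (e j), Wel T (e i)⟫_ℂ := inner_Sop A T (e j) (e i)
  rw [h, lp.inner_eq_tsum]
  rw [tsum_eq_single ((j, i) : ℕ × ℕ) ?side]
  case side =>
    intro p hp
    rcases Decidable.em (p.1 = j) with h1 | h1
    · have h2 : p.2 ≠ i := fun h2 => hp (Prod.ext h1 h2)
      simp [Uel_apply, Wel_apply, RCLike.inner_apply, e_apply_ne h2]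
    · simp [Uel_apply, Wel_apply, RCLike.inner_apply, e_apply_ne h1]
  · simp only [RCLike.inner_apply, Uel_apply, Wel_apply, e_apply_self, one_mul, mul_one,
      map_mul, ent_eq]
    exact mul_comm _ _

end SchurAux

/-- For a bounded operator `A` on `ℓ²`, the function `a(i,j) = ⟪A e_j, e_i⟫`
is a Schur multiplier, and `‖a‖_m ≤ ‖A‖_op`: there is a bounded linear map `S` on `B(ℓ²)`
realising the Schur multiplication by `a` with `‖S‖ ≤ ‖A‖`. -/
theorem matrix_of_operator_is_schur_multiplier (A : l2 →L[ℂ] l2) :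
    IsSchurMultiplier (fun p : ℕ × ℕ => ent A p.1 p.2) ∧
    ∃ S : (l2 →L[ℂ] l2) →L[ℂ] (l2 →L[ℂ] l2),
      (∀ T : l2 →L[ℂ] l2, ∀ i j, ent (S T) i j = ent A i j * ent T i j) ∧ ‖S‖ ≤ ‖A‖ := by
  constructor
  · intro A'
    exact ⟨SchurAux.Sop A A', fun i j => SchurAux.ent_Sop A A' i j⟩
  · exact ⟨SchurAux.SchurS A, fun T i j => SchurAux.ent_Sop A T i j,
      SchurAux.norm_SchurS_le A⟩

end
end

section
/- Let Δ = {(i,j) ∈ ℕ × ℕ : j ≤ i}. Then the characteristic function χ_Δ of Δ is not a Schur multiplier; that is, there exists a bounded operator A on ℓ² such that no bounded operator on ℓ² has matrix (χ_Δ(i,j)·⟪A e_j, e_i⟫). In particular, there are bounded functions on ℕ × ℕ that are not Schur multipliers. -/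
open scoped InnerProductSpace

noncomputable section

open MeasureTheory AddCircle Set Complex Finset Filter
open scoped Real ENNReal

section Aux

abbrev μ1 : Measure UnitAddCircle := haarAddCircle
abbrev H2 : Type := Lp ℂ 2 μ1

/-- The periodized Bernoulli polynomial `B₁` as a complex-valued function on the circle. -/
def bf : UnitAddCircle → ℂ := fun z => ((periodizedBernoulli 1 z : ℝ) : ℂ)

theorem bf_meas : Measurable bf := by
  apply Complex.measurable_ofReal.comp
  unfold periodizedBernoulli AddCircle.liftIco
  apply Measurable.comp (f := (equivIco 1 0)) (g := Set.restrict _ (bernoulliFun 1))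
  · exact ((Polynomial.continuous _).measurable.comp measurable_subtype_coe)
  · exact (measurableEquivIco 1 0).measurable

theorem bf_bound (z : UnitAddCircle) : ‖bf z‖ ≤ 1 := by
  have h2 : ((equivIco 1 0 z : ℝ)) ∈ Set.Ico (0:ℝ) (0+1) := (equivIco 1 0 z).2
  have : bf z = ((bernoulliFun 1 (equivIco 1 0 z : ℝ) : ℝ) : ℂ) := rfl
  rw [this, Complex.norm_real, Real.norm_eq_abs, bernoulliFun_one, abs_le]
  simp only [zero_add] at h2
  exact ⟨by linarith [h2.1], by linarith [h2.2.le]⟩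

theorem memmul (u : H2) : MemLp (fun x => bf x * u x) 2 μ1 :=
  MemLp.of_le_mul (Lp.memLp u)
    (bf_meas.aestronglyMeasurable.mul (Lp.aestronglyMeasurable u))
    (Filter.Eventually.of_forall fun x => by
      rw [norm_mul]
      exact mul_le_mul_of_nonneg_right (bf_bound x) (norm_nonneg _))

theorem eLp_le (u : H2) :
    eLpNorm (fun x => bf x * u x) 2 μ1 ≤ ENNReal.ofReal 1 * eLpNorm u 2 μ1 :=
  eLpNorm_le_mul_eLpNorm_of_ae_le_mul
    (Filter.Eventually.of_forall fun x => by
      rw [norm_mul]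
      exact mul_le_mul_of_nonneg_right (bf_bound x) (norm_nonneg _)) 2

/-- Multiplication by `bf`, as a linear map on `L²` of the circle. -/
def Mlin : H2 →ₗ[ℂ] H2 where
  toFun u := (memmul u).toLp (fun x => bf x * u x)
  map_add' u v := by
    rw [← MemLp.toLp_add (memmul u) (memmul v)]
    apply MemLp.toLp_congr
    filter_upwards [Lp.coeFn_add u v] with x hx
    rw [hx]
    simp [mul_add]
  map_smul' c u := by
    simp only [RingHom.id_apply]
    rw [← MemLp.toLp_const_smul c (memmul u)]
    apply MemLp.toLp_congr
    filter_upwards [Lp.coeFn_smul c u] with x hx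
    rw [hx]
    simp [mul_comm, mul_left_comm]

/-- Multiplication by `bf`, as a bounded operator on `L²` of the circle. -/
def M : H2 →L[ℂ] H2 :=
  LinearMap.mkContinuous Mlin 1 (fun u => by
    have h := eLp_le u
    simp only [ENNReal.ofReal_one, one_mul] at h
    have : ‖Mlin u‖ = (eLpNorm (fun x => bf x * u x) 2 μ1).toReal :=
      Lp.norm_toLp _ (memmul u)
    rw [this, one_mul, Lp.norm_def]
    exact ENNReal.toReal_mono (Lp.eLpNorm_ne_top u) h)

theorem M_apply_coe (u : H2) : (M u : UnitAddCircle → ℂ) =ᵐ[μ1] fun x => bf x * u x :=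
  MemLp.coeFn_toLp (memmul u)

/-- The orthonormal family of exponentials indexed by `ℕ`. -/
def onf : ℕ → H2 := fun n => fourierLp (T := 1) 2 (n : ℤ)

theorem onf_orthonormal : Orthonormal ℂ onf :=
  (orthonormal_fourier (T := 1)).comp _ (fun a b h => by exact_mod_cast h)

/-- The isometric embedding of `ℓ²(ℕ)` into `L²` of the circle sending `e n` to the
`n`-th exponential. -/
def Viso : l2 →ₗᵢ[ℂ] H2 := (onf_orthonormal.orthogonalFamily).linearIsometry

theorem Viso_e (j : ℕ) : Viso (e j) = onf j := by
  rw [Viso, e, OrthogonalFamily.linearIsometry_apply_single,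
    LinearIsometry.toSpanSingleton_apply, one_smul]

def Vclm : l2 →L[ℂ] H2 := Viso.toContinuousLinearMap

/-- The bounded operator on `ℓ²` whose matrix is the Toeplitz matrix `-1/(2πi(j-i))`. -/
def A0 : l2 →L[ℂ] l2 := (ContinuousLinearMap.adjoint Vclm).comp (M.comp Vclm)

theorem inner_M_fourier (i j : ℕ) :
    ⟪M (onf j), onf i⟫_ℂ = fourierCoeff bf ((j : ℤ) - (i : ℤ)) := by
  rw [MeasureTheory.L2.inner_def, fourierCoeff]
  apply integral_congr_ae
  filter_upwards [M_apply_coe (onf j), coeFn_fourierLp (T := 1) 2 (i : ℤ),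
    coeFn_fourierLp (T := 1) 2 (j : ℤ)] with x h1 h2 h3
  rw [RCLike.inner_apply, mul_comm]
  show (starRingEnd ℂ) ((M (onf j) : UnitAddCircle → ℂ) x) * ((onf i : UnitAddCircle → ℂ) x) = _
  rw [h1, onf, onf] at *
  rw [h2, h3]
  rw [map_mul, smul_eq_mul]
  have hconj : (starRingEnd ℂ) (bf x) = bf x := Complex.conj_ofReal _
  rw [hconj, ← fourier_neg, neg_sub, sub_eq_add_neg, fourier_add, fourier_neg]
  ring

theorem ent_A0 (i j : ℕ) :
    ent A0 i j = -1 / (2 * Real.pi * Complex.I * ((j : ℤ) - (i : ℤ))) := by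
  rw [ent, A0]
  show ⟪(ContinuousLinearMap.adjoint Vclm) (M (Vclm (e j))), e i⟫_ℂ = _
  rw [ContinuousLinearMap.adjoint_inner_left]
  show ⟪M (Viso (e j)), Viso (e i)⟫_ℂ = _
  rw [Viso_e, Viso_e, inner_M_fourier]
  have hbf : bf = Complex.ofReal ∘ periodizedBernoulli 1 := rfl
  rw [hbf, fourierCoeff_bernoulli_eq one_ne_zero]
  push_cast
  simp

theorem inner_e (j i : ℕ) : ⟪e j, e i⟫_ℂ = if j = i then 1 else 0 := by
  rw [e, lp.inner_single_left]
  split_ifs with h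
  · subst h; rw [e, lp.single_apply_self]; simp
  · rw [e, lp.single_apply_ne 2 i 1 h]; simp

def xv (n : ℕ) : l2 := ∑ j ∈ Finset.range n, e j

theorem quad (Bop : l2 →L[ℂ] l2) (n : ℕ) :
    ⟪Bop (xv n), xv n⟫_ℂ = ∑ j ∈ Finset.range n, ∑ i ∈ Finset.range n, ent Bop i j := by
  rw [xv, map_sum, sum_inner]
  exact Finset.sum_congr rfl fun j _ => inner_sum _ _ _

theorem xv_normsq (n : ℕ) : ‖xv n‖ ^ 2 = n := by
  have h : ⟪xv n, xv n⟫_ℂ = n := by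
    rw [xv, sum_inner]
    have : ∀ j, ⟪e j, ∑ i ∈ Finset.range n, e i⟫_ℂ = ∑ i ∈ Finset.range n, ⟪e j, e i⟫_ℂ :=
      fun j => inner_sum _ _ _
    simp_rw [this, inner_e]
    rw [Finset.sum_congr rfl (fun j hj => Finset.sum_ite_eq (Finset.range n) j (fun _ => (1:ℂ)))]
    simp [Finset.mem_range]
    rw [Finset.filter_true_of_mem (fun x hx => Finset.mem_range.mp hx), Finset.card_range]
  have := inner_self_eq_norm_sq (𝕜 := ℂ) (xv n)
  rw [h] at this
  simpa using this.symm

def Hm (m : ℕ) : ℝ := ∑ k ∈ Finset.range m, (1 / (k + 1) : ℝ)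

def Rn (n : ℕ) : ℝ :=
  ∑ j ∈ Finset.range n, ∑ i ∈ Finset.range n,
    (if j ≤ i then (1 / ((i - j : ℕ) : ℝ)) else 0)

theorem Rn_term_nonneg (j i : ℕ) : 0 ≤ (if j ≤ i then (1 / ((i - j : ℕ) : ℝ)) else 0) := by
  split_ifs <;> positivity

theorem Rn_nonneg (n : ℕ) : 0 ≤ Rn n :=
  Finset.sum_nonneg fun j _ => Finset.sum_nonneg fun i _ => Rn_term_nonneg j i

theorem key : ¬ ∃ B : l2 →L[ℂ] l2, ∀ i j,
    ent B i j = (if j ≤ i then (1 : ℂ) else 0) * ent A0 i j := by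
  rintro ⟨B, hB⟩
  have entB : ∀ i j, ent B i j
      = (2 * (Real.pi:ℂ) * Complex.I)⁻¹
        * (((if j ≤ i then (1/((i-j:ℕ):ℝ)) else 0) : ℝ) : ℂ) := by
    intro i j
    rw [hB, ent_A0]
    by_cases h : j ≤ i
    · rw [if_pos h, if_pos h, one_mul]
      have hc : (((j:ℤ)):ℂ) - ((i:ℤ):ℂ) = -(((i - j : ℕ):ℝ):ℂ) := by
        push_cast [Nat.cast_sub h]; ring
      rw [hc]
      push_cast
      simp only [div_eq_mul_inv, mul_inv, inv_neg, one_mul]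
      ring
    · rw [if_neg h, if_neg h, zero_mul]
      simp
  have sumB : ∀ n, ⟪B (xv n), xv n⟫_ℂ
      = (2 * (Real.pi:ℂ) * Complex.I)⁻¹ * ((Rn n : ℝ) : ℂ) := by
    intro n
    rw [quad, Rn]
    push_cast
    simp_rw [entB, ← Finset.mul_sum]
  have upper : ∀ n : ℕ, Rn n ≤ 2 * Real.pi * ‖B‖ * n := by
    intro n
    have h1 : ‖⟪B (xv n), xv n⟫_ℂ‖ ≤ ‖B‖ * (n : ℝ) := by
      calc ‖⟪B (xv n), xv n⟫_ℂ‖ ≤ ‖B (xv n)‖ * ‖xv n‖ := norm_inner_le_norm _ _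
        _ ≤ ‖B‖ * ‖xv n‖ * ‖xv n‖ :=
          mul_le_mul_of_nonneg_right (B.le_opNorm _) (norm_nonneg _)
        _ = ‖B‖ * (‖xv n‖ ^ 2) := by ring
        _ = ‖B‖ * n := by rw [xv_normsq]
    have h2 : ‖⟪B (xv n), xv n⟫_ℂ‖ = (2 * Real.pi)⁻¹ * Rn n := by
      rw [sumB, norm_mul, norm_inv, Complex.norm_real, Real.norm_eq_abs,
        _root_.abs_of_nonneg (Rn_nonneg n)]
      congr 2
      rw [norm_mul, norm_mul, Complex.norm_I, mul_one]
      norm_num [Complex.norm_real, Real.norm_eq_abs, _root_.abs_of_nonneg Real.pi_nonneg]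
    rw [h2] at h1
    have hπ : (0:ℝ) < 2 * Real.pi := by positivity
    calc Rn n = (2 * Real.pi) * ((2 * Real.pi)⁻¹ * Rn n) := by field_simp
      _ ≤ (2 * Real.pi) * (‖B‖ * n) := by
          exact mul_le_mul_of_nonneg_left h1 hπ.le
      _ = 2 * Real.pi * ‖B‖ * n := by ring
  have lower : ∀ m : ℕ, (m : ℝ) * Hm m ≤ Rn (2 * m) := by
    intro m
    have inner_lb : ∀ j ∈ Finset.range m,
        Hm m ≤ ∑ i ∈ Finset.range (2*m),
          (if j ≤ i then (1 / ((i - j : ℕ) : ℝ)) else 0) := by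
      intro j hj
      rw [Finset.mem_range] at hj
      have hsub : Finset.Ico (j+1) (j+1+m) ⊆ Finset.range (2*m) := by
        intro x hx
        rw [Finset.mem_Ico] at hx
        rw [Finset.mem_range]
        omega
      have step : ∑ i ∈ Finset.Ico (j+1) (j+1+m),
            (if j ≤ i then (1 / ((i - j : ℕ) : ℝ)) else 0)
          ≤ ∑ i ∈ Finset.range (2*m), (if j ≤ i then (1 / ((i - j : ℕ) : ℝ)) else 0) :=
        Finset.sum_le_sum_of_subset_of_nonneg hsub (fun i _ _ => Rn_term_nonneg j i)
      refine le_trans (le_of_eq ?_) step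
      rw [Finset.sum_Ico_eq_sum_range]
      have hval : ∀ k, (if j ≤ j+1+k then (1 / (((j+1+k) - j : ℕ) : ℝ)) else 0)
          = 1/((k:ℝ)+1) := by
        intro k
        rw [if_pos (by omega)]
        have hnat : (j+1+k) - j = k+1 := by omega
        rw [hnat]
        push_cast
        ring
      have hrange : j+1+m-(j+1) = m := by omega
      rw [hrange, Hm]
      exact Finset.sum_congr rfl fun k _ => (hval k).symm
    calc (m:ℝ) * Hm m = ∑ _j ∈ Finset.range m, Hm m := by
          rw [Finset.sum_const, Finset.card_range, nsmul_eq_mul]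
      _ ≤ ∑ j ∈ Finset.range m, ∑ i ∈ Finset.range (2*m),
            (if j ≤ i then (1 / ((i - j : ℕ) : ℝ)) else 0) :=
          Finset.sum_le_sum inner_lb
      _ ≤ Rn (2*m) := by
          rw [Rn]
          refine Finset.sum_le_sum_of_subset_of_nonneg
            (by intro x hx; rw [Finset.mem_range] at *; omega)
            (fun j _ _ => Finset.sum_nonneg fun i _ => Rn_term_nonneg j i)
  have bound : ∀ m : ℕ, 1 ≤ m → Hm m ≤ 4 * Real.pi * ‖B‖ := by
    intro m hm
    have h1 := (lower m).trans (upper (2*m))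
    have hm' : (0:ℝ) < m := by exact_mod_cast hm
    have : (m:ℝ) * Hm m ≤ (m:ℝ) * (4 * Real.pi * ‖B‖) := by
      calc (m:ℝ) * Hm m ≤ 2 * Real.pi * ‖B‖ * ((2*m : ℕ) : ℝ) := h1
        _ = (m:ℝ) * (4 * Real.pi * ‖B‖) := by push_cast; ring
    exact le_of_mul_le_mul_left this hm'
  obtain ⟨m, hm1, hm2⟩ :=
    ((Real.tendsto_sum_range_one_div_nat_succ_atTop.eventually_gt_atTop
        (4 * Real.pi * ‖B‖)).and (Filter.eventually_ge_atTop 1)).exists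
  exact absurd (bound m hm2) (not_le.mpr hm1)

end Aux

/-- The characteristic function of the "triangle" `Δ = {(i,j) : j ≤ i}` is
not a Schur multiplier: there is a bounded operator `A` on `ℓ²` such that no bounded
operator has matrix `(χ_Δ(i,j)·⟪A e_j, e_i⟫)`. In particular there are bounded functions
on `ℕ × ℕ` that are not Schur multipliers. -/
theorem triangle_truncation_not_schur_multiplier :
    (∃ A : l2 →L[ℂ] l2, ¬ ∃ B : l2 →L[ℂ] l2,
        ∀ i j, ent B i j = (if j ≤ i then (1 : ℂ) else 0) * ent A i j) ∧
    ¬ IsSchurMultiplier (fun p : ℕ × ℕ => if p.2 ≤ p.1 then (1 : ℂ) else 0) ∧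
    ∃ φ : ℕ × ℕ → ℂ, (∃ C, ∀ p : ℕ × ℕ, ‖φ p‖ ≤ C) ∧ ¬ IsSchurMultiplier φ := by
  have hnot : ¬ IsSchurMultiplier (fun p : ℕ × ℕ => if p.2 ≤ p.1 then (1 : ℂ) else 0) := by
    intro h
    obtain ⟨B, hB⟩ := h A0
    exact key ⟨B, fun i j => by simpa using hB i j⟩
  refine ⟨⟨A0, key⟩, hnot, ⟨_, ⟨1, fun p => ?_⟩, hnot⟩⟩
  by_cases h : p.2 ≤ p.1 <;> simp [h]

end
end

section
/- Let φ : ℕ × ℕ → ℂ be a bounded function. Then φ is a Schur multiplier such that S_φ(A) is a positive operator for every positive operator A ∈ B(ℓ²) if and only if there exists a sequence of bounded functions a_k : ℕ → ℂ (k ∈ ℕ) such that sup_{i ∈ ℕ} Σ_{k=1}^∞ |a_k(i)|² < ∞ and φ(i,j) = Σ_{k=1}^∞ a_k(i) · conj(a_k(j)) for all i, j ∈ ℕ. -/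
open scoped InnerProductSpace ComplexOrder ComplexConjugate ENNReal

set_option maxHeartbeats 1000000
set_option synthInstance.maxHeartbeats 1000000
set_option linter.unusedSectionVars false

noncomputable section

lemma two_toReal : (2 : ℝ≥0∞).toReal = 2 := by simp

lemma summable_sq_of_l2 (ξ : l2) : Summable fun i => ‖ξ i‖ ^ 2 := by
  have := lp.memℓp ξ
  rw [memℓp_gen_iff (by rw [two_toReal]; norm_num)] at this
  simpa [two_toReal, Real.rpow_natCast] using this

lemma memℓp_two_of {f : ℕ → ℂ} (h : Summable fun i => ‖f i‖ ^ 2) : Memℓp f 2 := by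
  apply memℓp_gen
  simpa [two_toReal, Real.rpow_natCast] using h

lemma l2_norm_sq (f : l2) : ∑' k, ‖f k‖ ^ 2 = ‖f‖ ^ 2 := by
  have := lp.norm_rpow_eq_tsum (p := 2) (by rw [two_toReal]; norm_num) f
  rw [two_toReal] at this
  calc ∑' k, ‖f k‖ ^ 2 = ∑' k, ‖f k‖ ^ (2 : ℝ) := by
        apply tsum_congr; intro k; rw [← Real.rpow_natCast]; norm_num
    _ = ‖f‖ ^ (2 : ℝ) := this.symm
    _ = ‖f‖ ^ 2 := by rw [← Real.rpow_natCast]; norm_num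

lemma tsum_CS {f g : ℕ → ℝ} (hf0 : ∀ k, 0 ≤ f k) (hg0 : ∀ k, 0 ≤ g k)
    (hf : Summable (fun k => f k ^ 2)) (hg : Summable (fun k => g k ^ 2)) :
    Summable (fun k => f k * g k) ∧
      ∑' k, f k * g k ≤ Real.sqrt (∑' k, f k ^ 2) * Real.sqrt (∑' k, g k ^ 2) := by
  have hb : ∀ s : Finset ℕ,
      ∑ k ∈ s, f k * g k ≤ Real.sqrt (∑' k, f k ^ 2) * Real.sqrt (∑' k, g k ^ 2) := by
    intro s
    refine (Real.sum_mul_le_sqrt_mul_sqrt s f g).trans ?_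
    gcongr
    · exact Summable.sum_le_tsum s (fun k _ => sq_nonneg _) hf
    · exact Summable.sum_le_tsum s (fun k _ => sq_nonneg _) hg
  have hs : Summable fun k => f k * g k :=
    summable_of_sum_le (fun k => mul_nonneg (hf0 k) (hg0 k)) hb
  exact ⟨hs, Summable.tsum_le_of_sum_le hs hb⟩

section Reverse

variable (a : ℕ → ℕ → ℂ) {C : ℝ}
variable (hsum : ∀ i, Summable fun k => ‖a k i‖ ^ 2)
variable (hC : ∀ i, ∑' k, ‖a k i‖ ^ 2 ≤ C)

include hsum hC

lemma ha_sq_le (k i : ℕ) : ‖a k i‖ ^ 2 ≤ C :=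
  (Summable.le_tsum (hsum i) k fun _ _ => sq_nonneg _).trans (hC i)

lemma hC0 : 0 ≤ C := (tsum_nonneg fun _ => sq_nonneg _).trans (hC 0)

/-- pointwise multiplication by `a k` as map `l2 → l2` -/
def dMul (k : ℕ) (ξ : l2) : l2 :=
  ⟨fun i => a k i * ξ i, memℓp_two_of (by
    refine Summable.of_nonneg_of_le (fun i => sq_nonneg _) (fun i => ?_)
      ((summable_sq_of_l2 ξ).mul_left C)
    rw [norm_mul, mul_pow]
    exact mul_le_mul_of_nonneg_right (ha_sq_le a hsum hC k i) (sq_nonneg _))⟩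

lemma dMul_apply (k : ℕ) (ξ : l2) (i : ℕ) : (dMul a hsum hC k ξ) i = a k i * ξ i := rfl

lemma dMul_add (k : ℕ) (ξ η : l2) :
    dMul a hsum hC k (ξ + η) = dMul a hsum hC k ξ + dMul a hsum hC k η := by
  apply lp.ext
  funext i
  simp [dMul_apply, mul_add]

lemma dMul_smul (k : ℕ) (c : ℂ) (ξ : l2) :
    dMul a hsum hC k (c • ξ) = c • dMul a hsum hC k ξ := by
  apply lp.ext
  funext i
  simp [dMul_apply]
  ring

lemma dMul_e (k j : ℕ) : dMul a hsum hC k (e j) = a k j • e j := by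
  apply lp.ext
  funext i
  simp only [dMul_apply, lp.coeFn_smul, Pi.smul_apply, e, lp.single_apply, Pi.single_apply,
    smul_eq_mul]
  by_cases h : i = j <;> simp [h]


lemma dMul_sq_summable (ξ : l2) :
    Summable (fun k => ‖dMul a hsum hC k ξ‖ ^ 2) ∧
      ∑' k, ‖dMul a hsum hC k ξ‖ ^ 2 ≤ C * ‖ξ‖ ^ 2 := by
  have hxi := summable_sq_of_l2 ξ
  have hins : ∀ k, Summable fun i => ‖a k i * ξ i‖ ^ 2 := by
    intro k
    refine Summable.of_nonneg_of_le (fun i => sq_nonneg _) (fun i => ?_) (hxi.mul_left C)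
    rw [norm_mul, mul_pow]
    exact mul_le_mul_of_nonneg_right (ha_sq_le a hsum hC k i) (sq_nonneg _)
  have hkey : ∀ (s : Finset ℕ) (i : ℕ), ∑ k ∈ s, ‖a k i * ξ i‖ ^ 2 ≤ C * ‖ξ i‖ ^ 2 := by
    intro s i
    calc ∑ k ∈ s, ‖a k i * ξ i‖ ^ 2 = (∑ k ∈ s, ‖a k i‖ ^ 2) * ‖ξ i‖ ^ 2 := by
          rw [Finset.sum_mul]
          exact Finset.sum_congr rfl fun k _ => by rw [norm_mul, mul_pow]
      _ ≤ C * ‖ξ i‖ ^ 2 :=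
          mul_le_mul_of_nonneg_right
            ((Summable.sum_le_tsum s (fun k _ => sq_nonneg _) (hsum i)).trans (hC i)) (sq_nonneg _)
  have hb : ∀ s : Finset ℕ, ∑ k ∈ s, ‖dMul a hsum hC k ξ‖ ^ 2 ≤ C * ‖ξ‖ ^ 2 := by
    intro s
    have h1 : ∑ k ∈ s, ‖dMul a hsum hC k ξ‖ ^ 2 = ∑' i, ∑ k ∈ s, ‖a k i * ξ i‖ ^ 2 := by
      rw [Summable.tsum_finsetSum (fun k _ => hins k)]
      exact Finset.sum_congr rfl fun k _ => (l2_norm_sq (dMul a hsum hC k ξ)).symm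
    rw [h1]
    calc ∑' i, ∑ k ∈ s, ‖a k i * ξ i‖ ^ 2 ≤ ∑' i, C * ‖ξ i‖ ^ 2 :=
          Summable.tsum_le_tsum (fun i => hkey s i) (summable_sum fun k _ => hins k) (hxi.mul_left C)
      _ = C * ∑' i, ‖ξ i‖ ^ 2 := tsum_mul_left
      _ = C * ‖ξ‖ ^ 2 := by rw [l2_norm_sq]
  have hs : Summable fun k => ‖dMul a hsum hC k ξ‖ ^ 2 :=
    summable_of_sum_le (fun k => sq_nonneg _) hb
  exact ⟨hs, Summable.tsum_le_of_sum_le hs hb⟩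

lemma inner_summable (A : l2 →L[ℂ] l2) (ξ η : l2) :
    Summable fun k => ⟪A (dMul a hsum hC k ξ), dMul a hsum hC k η⟫_ℂ := by
  have h1 := (dMul_sq_summable a hsum hC ξ).1
  have h2 := (dMul_sq_summable a hsum hC η).1
  have hcs := (tsum_CS (f := fun k => ‖dMul a hsum hC k ξ‖) (g := fun k => ‖dMul a hsum hC k η‖)
    (fun k => norm_nonneg _) (fun k => norm_nonneg _) h1 h2).1
  refine Summable.of_norm (Summable.of_nonneg_of_le (fun k => norm_nonneg _)
    (fun k => ?_) (hcs.mul_left ‖A‖))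
  calc ‖⟪A (dMul a hsum hC k ξ), dMul a hsum hC k η⟫_ℂ‖
      ≤ ‖A (dMul a hsum hC k ξ)‖ * ‖dMul a hsum hC k η‖ := norm_inner_le_norm _ _
    _ ≤ (‖A‖ * ‖dMul a hsum hC k ξ‖) * ‖dMul a hsum hC k η‖ :=
        mul_le_mul_of_nonneg_right (A.le_opNorm _) (norm_nonneg _)
    _ = ‖A‖ * (‖dMul a hsum hC k ξ‖ * ‖dMul a hsum hC k η‖) := by ring

lemma inner_tsum_bound (A : l2 →L[ℂ] l2) (ξ η : l2) :
    ‖∑' k, ⟪A (dMul a hsum hC k ξ), dMul a hsum hC k η⟫_ℂ‖ ≤ ‖A‖ * C * ‖ξ‖ * ‖η‖ := by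
  have h1 := dMul_sq_summable a hsum hC ξ
  have h2 := dMul_sq_summable a hsum hC η
  have hcs := tsum_CS (f := fun k => ‖dMul a hsum hC k ξ‖) (g := fun k => ‖dMul a hsum hC k η‖)
    (fun k => norm_nonneg _) (fun k => norm_nonneg _) h1.1 h2.1
  have hnorm : ∀ k, ‖⟪A (dMul a hsum hC k ξ), dMul a hsum hC k η⟫_ℂ‖
      ≤ ‖A‖ * (‖dMul a hsum hC k ξ‖ * ‖dMul a hsum hC k η‖) := by
    intro k
    calc ‖⟪A (dMul a hsum hC k ξ), dMul a hsum hC k η⟫_ℂ‖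
        ≤ ‖A (dMul a hsum hC k ξ)‖ * ‖dMul a hsum hC k η‖ := norm_inner_le_norm _ _
      _ ≤ (‖A‖ * ‖dMul a hsum hC k ξ‖) * ‖dMul a hsum hC k η‖ :=
          mul_le_mul_of_nonneg_right (A.le_opNorm _) (norm_nonneg _)
      _ = _ := by ring
  have hnsum : Summable fun k => ‖⟪A (dMul a hsum hC k ξ), dMul a hsum hC k η⟫_ℂ‖ :=
    Summable.of_nonneg_of_le (fun k => norm_nonneg _) hnorm (hcs.1.mul_left ‖A‖)
  calc ‖∑' k, ⟪A (dMul a hsum hC k ξ), dMul a hsum hC k η⟫_ℂ‖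
      ≤ ∑' k, ‖A‖ * (‖dMul a hsum hC k ξ‖ * ‖dMul a hsum hC k η‖) :=
        (norm_tsum_le_tsum_norm hnsum).trans (Summable.tsum_le_tsum hnorm hnsum (hcs.1.mul_left ‖A‖))
    _ = ‖A‖ * ∑' k, ‖dMul a hsum hC k ξ‖ * ‖dMul a hsum hC k η‖ := tsum_mul_left
    _ ≤ ‖A‖ * (Real.sqrt (∑' k, ‖dMul a hsum hC k ξ‖ ^ 2)
          * Real.sqrt (∑' k, ‖dMul a hsum hC k η‖ ^ 2)) := by
        refine mul_le_mul_of_nonneg_left hcs.2 (norm_nonneg _)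
    _ ≤ ‖A‖ * (Real.sqrt (C * ‖ξ‖ ^ 2) * Real.sqrt (C * ‖η‖ ^ 2)) := by
        refine mul_le_mul_of_nonneg_left (mul_le_mul ?_ ?_ (Real.sqrt_nonneg _)
          (Real.sqrt_nonneg _)) (norm_nonneg _)
        · exact Real.sqrt_le_sqrt h1.2
        · exact Real.sqrt_le_sqrt h2.2
    _ = ‖A‖ * C * ‖ξ‖ * ‖η‖ := by
        rw [Real.sqrt_mul (hC0 a hsum hC), Real.sqrt_mul (hC0 a hsum hC),
          Real.sqrt_sq (norm_nonneg ξ), Real.sqrt_sq (norm_nonneg η)]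
        have hss : Real.sqrt C * Real.sqrt C = C := Real.mul_self_sqrt (hC0 a hsum hC)
        calc ‖A‖ * (Real.sqrt C * ‖ξ‖ * (Real.sqrt C * ‖η‖))
            = ‖A‖ * ((Real.sqrt C * Real.sqrt C) * ‖ξ‖ * ‖η‖) := by ring
          _ = ‖A‖ * C * ‖ξ‖ * ‖η‖ := by rw [hss]; ring

/-- The bounded functional `η ↦ ∑' k, ⟪A (d_k ξ), d_k η⟫`. -/
def formF (A : l2 →L[ℂ] l2) (ξ : l2) : l2 →L[ℂ] ℂ :=
  LinearMap.mkContinuous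
    { toFun := fun η => ∑' k, ⟪A (dMul a hsum hC k ξ), dMul a hsum hC k η⟫_ℂ
      map_add' := by
        intro η η'
        simp only [dMul_add, inner_add_right]
        exact Summable.tsum_add (inner_summable a hsum hC A ξ η) (inner_summable a hsum hC A ξ η')
      map_smul' := by
        intro c η
        simp only [dMul_smul, inner_smul_right, RingHom.id_apply, smul_eq_mul]
        exact tsum_mul_left }
    (‖A‖ * C * ‖ξ‖)
    (fun η => by
      simpa [mul_assoc] using inner_tsum_bound a hsum hC A ξ η)

lemma formF_apply (A : l2 →L[ℂ] l2) (ξ η : l2) :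
    formF a hsum hC A ξ η = ∑' k, ⟪A (dMul a hsum hC k ξ), dMul a hsum hC k η⟫_ℂ := rfl

lemma formF_norm (A : l2 →L[ℂ] l2) (ξ : l2) :
    ‖formF a hsum hC A ξ‖ ≤ ‖A‖ * C * ‖ξ‖ :=
  LinearMap.mkContinuous_norm_le _
    (mul_nonneg (mul_nonneg (norm_nonneg _) (hC0 a hsum hC)) (norm_nonneg _)) _

/-- The Schur multiplier applied to `A`. -/
def SchurOp (A : l2 →L[ℂ] l2) : l2 →L[ℂ] l2 :=
  LinearMap.mkContinuous
    { toFun := fun ξ => (InnerProductSpace.toDual ℂ l2).symm (formF a hsum hC A ξ)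
      map_add' := by
        intro ξ ξ'
        show (InnerProductSpace.toDual ℂ l2).symm _
          = (InnerProductSpace.toDual ℂ l2).symm _ + (InnerProductSpace.toDual ℂ l2).symm _
        rw [← map_add]
        congr 1
        apply ContinuousLinearMap.ext
        intro η
        simp only [formF_apply, ContinuousLinearMap.add_apply, dMul_add, inner_add_left,
          map_add]
        exact Summable.tsum_add (inner_summable a hsum hC A ξ η) (inner_summable a hsum hC A ξ' η)
      map_smul' := by
        intro c ξ
        show (InnerProductSpace.toDual ℂ l2).symm _ = c • (InnerProductSpace.toDual ℂ l2).symm _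
        have h1 : formF a hsum hC A (c • ξ) = (starRingEnd ℂ c) • formF a hsum hC A ξ := by
          apply ContinuousLinearMap.ext
          intro η
          simp only [formF_apply, ContinuousLinearMap.smul_apply, dMul_smul, map_smul,
            inner_smul_left, smul_eq_mul]
          exact tsum_mul_left
        rw [h1, LinearIsometryEquiv.map_smulₛₗ]
        simp }
    (‖A‖ * C)
    (fun ξ => by
      show ‖(InnerProductSpace.toDual ℂ l2).symm (formF a hsum hC A ξ)‖ ≤ _
      rw [LinearIsometryEquiv.norm_map]
      exact formF_norm a hsum hC A ξ)

lemma inner_SchurOp (A : l2 →L[ℂ] l2) (ξ η : l2) :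
    ⟪SchurOp a hsum hC A ξ, η⟫_ℂ = ∑' k, ⟪A (dMul a hsum hC k ξ), dMul a hsum hC k η⟫_ℂ := by
  change ⟪(InnerProductSpace.toDual ℂ l2).symm (formF a hsum hC A ξ), η⟫_ℂ = _
  rw [InnerProductSpace.toDual_symm_apply]
  rfl

lemma SchurOp_norm (A : l2 →L[ℂ] l2) : ‖SchurOp a hsum hC A‖ ≤ C * ‖A‖ := by
  rw [mul_comm]
  exact LinearMap.mkContinuous_norm_le _ (mul_nonneg (norm_nonneg _) (hC0 a hsum hC)) _

/-- The Schur multiplier as a continuous linear map on `B(ℓ²)`. -/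
def SMul2 : (l2 →L[ℂ] l2) →L[ℂ] (l2 →L[ℂ] l2) :=
  LinearMap.mkContinuous
    { toFun := SchurOp a hsum hC
      map_add' := by
        intro A A'
        apply ContinuousLinearMap.ext
        intro ξ
        apply ext_inner_right ℂ
        intro η
        rw [ContinuousLinearMap.add_apply, inner_add_left, inner_SchurOp, inner_SchurOp, inner_SchurOp]
        simp only [ContinuousLinearMap.add_apply, inner_add_left]
        exact Summable.tsum_add (inner_summable a hsum hC A ξ η) (inner_summable a hsum hC A' ξ η)
      map_smul' := by
        intro c A
        apply ContinuousLinearMap.ext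
        intro ξ
        apply ext_inner_right ℂ
        intro η
        rw [RingHom.id_apply, ContinuousLinearMap.smul_apply, inner_smul_left, inner_SchurOp,
          inner_SchurOp]
        simp only [ContinuousLinearMap.smul_apply, inner_smul_left]
        exact tsum_mul_left }
    C
    (fun A => SchurOp_norm a hsum hC A)

lemma SMul2_apply (A : l2 →L[ℂ] l2) : SMul2 a hsum hC A = SchurOp a hsum hC A := rfl

lemma SMul2_ent (A : l2 →L[ℂ] l2) (i j : ℕ) :
    ent (SMul2 a hsum hC A) i j = (∑' k, a k i * (starRingEnd ℂ) (a k j)) * ent A i j := by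
  rw [ent, SMul2_apply, inner_SchurOp, ← tsum_mul_right]
  apply tsum_congr
  intro k
  rw [dMul_e, dMul_e, map_smul, inner_smul_left, inner_smul_right]
  simp only [ent]
  ring

lemma SMul2_pos (A : l2 →L[ℂ] l2) (hA : ∀ ξ : l2, 0 ≤ ⟪A ξ, ξ⟫_ℂ) (ξ : l2) :
    0 ≤ ⟪SMul2 a hsum hC A ξ, ξ⟫_ℂ := by
  rw [SMul2_apply, inner_SchurOp]
  exact tsum_nonneg fun k => hA _

end Reverse

section Forward

instance l2CFC : NonUnitalContinuousFunctionalCalculus ℝ (l2 →L[ℂ] l2) IsSelfAdjoint :=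
  IsSelfAdjoint.instNonUnitalContinuousFunctionalCalculus

lemma clm_isPositive_of_inner (G : l2 →L[ℂ] l2) (h : ∀ ξ : l2, 0 ≤ ⟪G ξ, ξ⟫_ℂ) :
    G.IsPositive := by
  rw [ContinuousLinearMap.isPositive_iff_complex]
  intro x
  have hx := h x
  rw [Complex.nonneg_iff] at hx
  constructor
  · apply Complex.ext <;> simp [hx.2]
  · exact hx.1

/-- The geometric weight vector `(2⁻ⁱ)ᵢ` in `ℓ²`. -/
def wvec : l2 :=
  ⟨fun i => (2:ℂ)⁻¹ ^ i, memℓp_two_of (by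
    have h : (fun i : ℕ => ‖(2:ℂ)⁻¹ ^ i‖ ^ 2) = fun i : ℕ => ((1:ℝ)/4) ^ i := by
      funext i
      rw [norm_pow, norm_inv]
      have : ‖(2:ℂ)‖ = 2 := by simp
      rw [this]
      rw [← pow_mul, one_div]
      rw [show ((4:ℝ))⁻¹ = ((2:ℝ)⁻¹) ^ 2 by norm_num, ← pow_mul, mul_comm]
    rw [h]
    exact summable_geometric_of_lt_one (by norm_num) (by norm_num))⟩

lemma wvec_apply (i : ℕ) : wvec i = (2:ℂ)⁻¹ ^ i := rfl

/-- The rank one operator `ξ ↦ ⟪w, ξ⟫ w`. -/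
def Qop : l2 →L[ℂ] l2 := (innerSL ℂ wvec).smulRight wvec

lemma Qop_apply (ξ : l2) : Qop ξ = ⟪wvec, ξ⟫_ℂ • wvec := rfl

lemma Qop_pos (ξ : l2) : 0 ≤ ⟪Qop ξ, ξ⟫_ℂ := by
  rw [Qop_apply, inner_smul_left]
  simpa [starRingEnd_apply] using star_mul_self_nonneg (⟪wvec, ξ⟫_ℂ)

lemma inner_wvec_e (m : ℕ) : ⟪wvec, e m⟫_ℂ = (starRingEnd ℂ) ((2:ℂ)⁻¹ ^ m) := by
  rw [e, lp.inner_single_right, RCLike.inner_apply, one_mul, wvec_apply]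

lemma conj_two_pow (m : ℕ) : (starRingEnd ℂ) ((2:ℂ)⁻¹ ^ m) = (2:ℂ)⁻¹ ^ m := by
  have h2 : (starRingEnd ℂ) 2 = 2 := by
    rw [Complex.conj_eq_iff_im]
    rfl
  rw [map_pow, map_inv₀, h2]

lemma Qop_ent (i j : ℕ) : ent Qop i j = (2:ℂ)⁻¹ ^ j * (2:ℂ)⁻¹ ^ i := by
  rw [ent, Qop_apply, inner_smul_left, inner_wvec_e, inner_wvec_e, conj_two_pow,
    conj_two_pow, conj_two_pow]

end Forward

open scoped ComplexOrder ComplexConjugate in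
/-- A bounded `φ : ℕ × ℕ → ℂ` is a positive Schur multiplier (i.e. a Schur
multiplier whose induced map `S_φ` sends positive operators to positive operators) if and
only if `φ(i,j) = Σ_k a_k(i) conj(a_k(j))` for a sequence of bounded functions `a_k` with
`sup_i Σ_k |a_k(i)|² < ∞`. -/
theorem positive_schur_multipliers (φ : ℕ × ℕ → ℂ) (Cb : ℝ)
    (hφb : ∀ p : ℕ × ℕ, ‖φ p‖ ≤ Cb) :
    (∃ S : (l2 →L[ℂ] l2) →L[ℂ] (l2 →L[ℂ] l2),
        (∀ A : l2 →L[ℂ] l2, ∀ i j, ent (S A) i j = φ (i, j) * ent A i j) ∧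
        ∀ A : l2 →L[ℂ] l2, (∀ ξ : l2, 0 ≤ ⟪A ξ, ξ⟫_ℂ) → ∀ ξ : l2, 0 ≤ ⟪S A ξ, ξ⟫_ℂ)
    ↔ ∃ a : ℕ → ℕ → ℂ,
        (∀ k, ∃ c, ∀ i, ‖a k i‖ ≤ c) ∧
        (∀ i, Summable fun k => ‖a k i‖ ^ 2) ∧
        BddAbove (Set.range fun i => ∑' k, ‖a k i‖ ^ 2) ∧
        ∀ i j, φ (i, j) = ∑' k, a k i * conj (a k j) := by
  constructor
  · rintro ⟨S, hent, hpos⟩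
    have hCb0 : (0:ℝ) ≤ Cb := (norm_nonneg _).trans (hφb (0, 0))
    set G := S Qop with hGdef
    have hGpos : ∀ ξ : l2, 0 ≤ ⟪G ξ, ξ⟫_ℂ := hpos Qop Qop_pos
    have hG0 : 0 ≤ G :=
      (ContinuousLinearMap.nonneg_iff_isPositive G).mpr (clm_isPositive_of_inner G hGpos)
    set R := CFC.sqrt G with hRdef
    have hR0 : 0 ≤ R := CFC.sqrt_nonneg G
    have hRsa : IsSelfAdjoint R :=
      ((ContinuousLinearMap.nonneg_iff_isPositive R).mp hR0).isSelfAdjoint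
    have hRsym : ∀ x y : l2, ⟪R x, y⟫_ℂ = ⟪x, R y⟫_ℂ := fun x y =>
      ContinuousLinearMap.isSelfAdjoint_iff_isSymmetric.mp hRsa x y
    have hRR : ∀ x : l2, R (R x) = G x := by
      intro x
      have h : R * R = G := CFC.sqrt_mul_sqrt_self G hG0
      calc R (R x) = (R * R) x := rfl
        _ = G x := by rw [h]
    set u : ℕ → l2 := fun i => ((2:ℂ) ^ i) • R (e i) with hu
    have hui : ∀ i j, ⟪u j, u i⟫_ℂ = φ (i, j) := by
      intro i j
      have h1 : ⟪R (e j), R (e i)⟫_ℂ = ent G i j := by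
        simp only [ent]
        rw [← hRR (e j)]
        exact (hRsym (R (e j)) (e i)).symm
      have h2 : ent G i j = φ (i, j) * ((2:ℂ)⁻¹ ^ j * (2:ℂ)⁻¹ ^ i) := by
        rw [hGdef, hent Qop i j, Qop_ent]
      have hconj2 : (starRingEnd ℂ) ((2:ℂ) ^ j) = (2:ℂ) ^ j := by
        rw [map_pow]
        congr 1
        rw [Complex.conj_eq_iff_im]
        rfl
      have h3 : ∀ m : ℕ, (2:ℂ) ^ m * (2:ℂ)⁻¹ ^ m = 1 := by
        intro m
        rw [← mul_pow]
        norm_num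
      calc ⟪u j, u i⟫_ℂ
          = (starRingEnd ℂ) ((2:ℂ) ^ j) * ((2:ℂ) ^ i * ⟪R (e j), R (e i)⟫_ℂ) := by
            simp only [hu]
            rw [inner_smul_left, inner_smul_right]
        _ = (2:ℂ) ^ j * ((2:ℂ) ^ i * (φ (i, j) * ((2:ℂ)⁻¹ ^ j * (2:ℂ)⁻¹ ^ i))) := by
            rw [hconj2, h1, h2]
        _ = φ (i, j) * (((2:ℂ) ^ j * (2:ℂ)⁻¹ ^ j) * ((2:ℂ) ^ i * (2:ℂ)⁻¹ ^ i)) := by ring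
        _ = φ (i, j) := by rw [h3 j, h3 i]; ring
    have hnorm_ui : ∀ i, ‖u i‖ ^ 2 ≤ Cb := by
      intro i
      have h2 : ‖u i‖ ^ 2 = (φ (i, i)).re := by
        rw [← hui i i]
        exact (inner_self_eq_norm_sq (𝕜 := ℂ) (u i)).symm
      rw [h2]
      exact (Complex.re_le_norm _).trans (hφb (i, i))
    refine ⟨fun k i => (u i : ℕ → ℂ) k, fun k => ⟨Real.sqrt Cb, fun i => ?_⟩,
      fun i => summable_sq_of_l2 (u i), ⟨Cb, ?_⟩, fun i j => ?_⟩
    · refine (lp.norm_apply_le_norm (by norm_num) (u i) k).trans ?_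
      exact (Real.le_sqrt (norm_nonneg _) hCb0).mpr (hnorm_ui i)
    · rintro x ⟨i, rfl⟩
      show ∑' k, ‖(u i : ℕ → ℂ) k‖ ^ 2 ≤ Cb
      rw [l2_norm_sq (u i)]
      exact hnorm_ui i
    · rw [← hui i j, lp.inner_eq_tsum]
      apply tsum_congr
      intro k
      rw [RCLike.inner_apply, mul_comm]
  · rintro ⟨a, ha, hsum, hbdd, hφ⟩
    obtain ⟨C, hCub⟩ := hbdd
    have hC : ∀ i, ∑' k, ‖a k i‖ ^ 2 ≤ C := fun i => hCub (Set.mem_range_self i)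
    refine ⟨SMul2 a hsum hC, fun A i j => ?_, fun A hA ξ => SMul2_pos a hsum hC A hA ξ⟩
    rw [SMul2_ent, ← hφ i j]


end
end
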